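/- The map Φ(S N S^{−1}) = S^{−1} N S (S positive definite, N normal) acts on eigenspaces by eversion: if A is diagonalizable with simple spectrum {λ_1,...,λ_n} and eigenlines ℓ_i = ker(λ_i − A), then the eigenline of Φ(A) for λ_i is (⊕_{j≠i} ℓ_j)^⊥. -/

import Mathlib

open Matrix
open scoped ComplexOrder

private lemma toEL_mul {n : ℕ} (M P : Matrix (Fin n) (Fin n) ℂ) (x : EuclideanSpace ℂ (Fin n)) :
    toEuclideanLin (M * P) x = toEuclideanLin M (toEuclideanLin P x) := by
  simp [Matrix.toEuclideanLin_apply, Matrix.mulVec_mulVec]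

private lemma toEL_one {n : ℕ} (x : EuclideanSpace ℂ (Fin n)) :
    toEuclideanLin (1 : Matrix (Fin n) (Fin n) ℂ) x = x := by
  simp [Matrix.toEuclideanLin_apply]

private lemma normal_eigen {n : ℕ} (N : Matrix (Fin n) (Fin n) ℂ) (hN : Nᴴ * N = N * Nᴴ) (μ : ℂ)
    (x : EuclideanSpace ℂ (Fin n)) :
    toEuclideanLin N x = μ • x ↔ toEuclideanLin Nᴴ x = (starRingEnd ℂ) μ • x := by
  set M : Matrix (Fin n) (Fin n) ℂ := N - μ • 1 with hM
  have hMH : Mᴴ = Nᴴ - (starRingEnd ℂ) μ • 1 := by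
    simp [hM]
  have hMnormal : Mᴴ * M = M * Mᴴ := by
    rw [hMH]
    simp only [hMH, hM, Matrix.sub_mul, Matrix.mul_sub, Matrix.smul_mul, Matrix.mul_smul,
      Matrix.mul_one, Matrix.one_mul, hN, smul_smul, smul_sub]
    module
  have hadj : toEuclideanLin M = LinearMap.adjoint (toEuclideanLin Mᴴ) := by
    rw [← Matrix.toEuclideanLin_conjTranspose_eq_adjoint, conjTranspose_conjTranspose]
  have key : (inner ℂ (toEuclideanLin M x) (toEuclideanLin M x) : ℂ)
      = inner ℂ (toEuclideanLin Mᴴ x) (toEuclideanLin Mᴴ x) := by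
    have h1 : (inner ℂ x (toEuclideanLin (Mᴴ * M) x) : ℂ)
        = inner ℂ (toEuclideanLin M x) (toEuclideanLin M x) := by
      rw [toEL_mul, Matrix.toEuclideanLin_conjTranspose_eq_adjoint,
        LinearMap.adjoint_inner_right]
    have h2 : (inner ℂ x (toEuclideanLin (M * Mᴴ) x) : ℂ)
        = inner ℂ (toEuclideanLin Mᴴ x) (toEuclideanLin Mᴴ x) := by
      rw [toEL_mul, hadj, LinearMap.adjoint_inner_right]
    rw [← h1, ← h2, hMnormal]
  have hMx : toEuclideanLin M x = toEuclideanLin N x - μ • x := by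
    have h : toEuclideanLin M = toEuclideanLin N - μ • toEuclideanLin 1 := by
      simp [hM, map_sub]
    simp [h, Matrix.toEuclideanLin_apply]
  have hMHx : toEuclideanLin Mᴴ x = toEuclideanLin Nᴴ x - (starRingEnd ℂ) μ • x := by
    have h : toEuclideanLin Mᴴ = toEuclideanLin Nᴴ - (starRingEnd ℂ) μ • toEuclideanLin 1 := by
      simp [hMH, map_sub]
    simp [h, Matrix.toEuclideanLin_apply]
  constructor
  · intro h
    have h0 : toEuclideanLin M x = 0 := by rw [hMx, h, sub_self]
    have h1 : (inner ℂ (toEuclideanLin Mᴴ x) (toEuclideanLin Mᴴ x) : ℂ) = 0 := by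
      rw [← key, h0, inner_zero_left]
    have h2 := inner_self_eq_zero.mp h1
    rw [hMHx] at h2
    exact sub_eq_zero.mp h2
  · intro h
    have h0 : toEuclideanLin Mᴴ x = 0 := by rw [hMHx, h, sub_self]
    have h1 : (inner ℂ (toEuclideanLin M x) (toEuclideanLin M x) : ℂ) = 0 := by
      rw [key, h0, inner_zero_left]
    have h2 := inner_self_eq_zero.mp h1
    rw [hMx] at h2
    exact sub_eq_zero.mp h2

private lemma conj_eigen_iff {n : ℕ} {P Q M : Matrix (Fin n) (Fin n) ℂ}
    (hPQ : P * Q = 1) (hQP : Q * P = 1) (μ : ℂ) (x : EuclideanSpace ℂ (Fin n)) :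
    toEuclideanLin (P * M * Q) x = μ • x ↔
      toEuclideanLin M (toEuclideanLin Q x) = μ • toEuclideanLin Q x := by
  constructor
  · intro h
    have h2 := congrArg (toEuclideanLin Q) h
    rw [← toEL_mul, LinearMap.map_smul] at h2
    have hassoc : Q * (P * M * Q) = M * Q := by
      rw [Matrix.mul_assoc P M Q, ← Matrix.mul_assoc Q, hQP, Matrix.one_mul]
    rw [hassoc, toEL_mul] at h2
    exact h2
  · intro h
    have h3 : toEuclideanLin (P * M * Q) x
        = toEuclideanLin P (toEuclideanLin M (toEuclideanLin Q x)) := by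
      rw [toEL_mul, toEL_mul]
    rw [h3, h, LinearMap.map_smul, ← toEL_mul, hPQ, toEL_one]

/-- The map `Φ(S N S⁻¹) := S⁻¹ N S` (with `S` positive definite and `N` normal)
acts on the eigenlines of a simple-spectrum diagonalizable matrix `A = S N S⁻¹`
by eversion: the eigenline of `Φ(A)` for `λ_i` is `(⨆_{j ≠ i} ℓ_j)ᗮ`, where
`ℓ_j = ker (λ_j - A)`. -/
theorem stmt12 (n : ℕ) (S N : Matrix (Fin n) (Fin n) ℂ)
    (hS : S.PosDef) (hN : Nᴴ * N = N * Nᴴ)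
    (lam : Fin n → ℂ) (hlam : Function.Injective lam)
    (hne : ∀ i, Module.End.eigenspace (Matrix.toEuclideanLin (S * N * S⁻¹)) (lam i) ≠ ⊥) :
    ∀ i, Module.End.eigenspace (Matrix.toEuclideanLin (S⁻¹ * N * S)) (lam i) =
      (⨆ j, ⨆ _ : j ≠ i,
        Module.End.eigenspace (Matrix.toEuclideanLin (S * N * S⁻¹)) (lam j))ᗮ := by
  intro i
  classical
  have hdet : IsUnit S.det := hS.det_pos.ne'.isUnit
  have hSS' : S * S⁻¹ = 1 := Matrix.mul_nonsing_inv S hdet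
  have hS'S : S⁻¹ * S = 1 := Matrix.nonsing_inv_mul S hdet
  -- membership characterizations
  have memA : ∀ (μ : ℂ) (x : EuclideanSpace ℂ (Fin n)),
      x ∈ Module.End.eigenspace (toEuclideanLin (S * N * S⁻¹)) μ ↔
        toEuclideanLin N (toEuclideanLin S⁻¹ x) = μ • toEuclideanLin S⁻¹ x := fun μ x =>
    Module.End.mem_eigenspace_iff.trans (conj_eigen_iff hSS' hS'S μ x)
  have memB : ∀ (μ : ℂ) (x : EuclideanSpace ℂ (Fin n)),
      x ∈ Module.End.eigenspace (toEuclideanLin (S⁻¹ * N * S)) μ ↔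
        toEuclideanLin N (toEuclideanLin S x) = μ • toEuclideanLin S x := fun μ x =>
    Module.End.mem_eigenspace_iff.trans (conj_eigen_iff hS'S hSS' μ x)
  -- the adjoint of Φ(A)
  have hBH : (S⁻¹ * N * S)ᴴ = S * Nᴴ * S⁻¹ := by
    rw [conjTranspose_mul, conjTranspose_mul, Matrix.conjTranspose_nonsing_inv, hS.1.eq,
      Matrix.mul_assoc]
  have hadjB : LinearMap.adjoint (toEuclideanLin (S⁻¹ * N * S)) = toEuclideanLin (S * Nᴴ * S⁻¹) := by
    rw [← Matrix.toEuclideanLin_conjTranspose_eq_adjoint, hBH]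
  -- E_A(μ) is the eigenspace of the adjoint of Φ(A) at conj μ
  have memA' : ∀ (μ : ℂ) (y : EuclideanSpace ℂ (Fin n)),
      y ∈ Module.End.eigenspace (toEuclideanLin (S * N * S⁻¹)) μ ↔
        toEuclideanLin (S * Nᴴ * S⁻¹) y = (starRingEnd ℂ) μ • y := by
    intro μ y
    rw [memA, conj_eigen_iff hSS' hS'S, normal_eigen N hN]
  -- orthogonality
  have orth : ∀ j, j ≠ i → ∀ x ∈ Module.End.eigenspace (toEuclideanLin (S⁻¹ * N * S)) (lam i),
      ∀ y ∈ Module.End.eigenspace (toEuclideanLin (S * N * S⁻¹)) (lam j),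
      (inner ℂ y x : ℂ) = 0 := by
    intro j hj x hx y hy
    have hx' := Module.End.mem_eigenspace_iff.mp hx
    have hy' := (memA' (lam j) y).mp hy
    have e1 : (inner ℂ y (toEuclideanLin (S⁻¹ * N * S) x) : ℂ) = lam i * inner ℂ y x := by
      rw [hx', inner_smul_right]
    have e2 : (inner ℂ y (toEuclideanLin (S⁻¹ * N * S) x) : ℂ) = lam j * inner ℂ y x := by
      rw [← LinearMap.adjoint_inner_left, hadjB, hy', inner_smul_left, Complex.conj_conj]
    have hlamne : lam j ≠ lam i := fun h => hj (hlam h)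
    have : (lam i - lam j) * inner ℂ y x = 0 := by rw [sub_mul, ← e1, ← e2, sub_self]
    rcases mul_eq_zero.mp this with h | h
    · exact absurd (sub_eq_zero.mp h).symm hlamne
    · exact h
  set K : Submodule ℂ (EuclideanSpace ℂ (Fin n)) :=
    ⨆ j, ⨆ _ : j ≠ i, Module.End.eigenspace (toEuclideanLin (S * N * S⁻¹)) (lam j) with hK
  -- inclusion
  have hle : Module.End.eigenspace (toEuclideanLin (S⁻¹ * N * S)) (lam i) ≤ Kᗮ := by
    have h1 : K ≤ (Module.End.eigenspace (toEuclideanLin (S⁻¹ * N * S)) (lam i))ᗮ := by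
      refine iSup_le fun j => iSup_le fun hj => ?_
      intro y hy
      rw [Submodule.mem_orthogonal]
      intro x hx
      rw [inner_eq_zero_symm]
      exact orth j hj x hx y hy
    exact le_trans (Submodule.le_orthogonal_orthogonal _) (Submodule.orthogonal_le h1)
  -- Φ(A)'s eigenspace is nonzero
  obtain ⟨y₀, hy₀, hy₀0⟩ := Submodule.exists_mem_ne_zero_of_ne_bot (hne i)
  have hBne : Module.End.eigenspace (toEuclideanLin (S⁻¹ * N * S)) (lam i) ≠ ⊥ := by
    set x₀ : EuclideanSpace ℂ (Fin n) := toEuclideanLin S⁻¹ (toEuclideanLin S⁻¹ y₀) with hx₀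
    have hSx₀ : toEuclideanLin S x₀ = toEuclideanLin S⁻¹ y₀ := by
      rw [hx₀, ← toEL_mul, hSS', toEL_one]
    have hx₀mem : x₀ ∈ Module.End.eigenspace (toEuclideanLin (S⁻¹ * N * S)) (lam i) := by
      rw [memB, hSx₀]
      exact (memA (lam i) y₀).mp hy₀
    have hx₀0 : x₀ ≠ 0 := by
      intro h
      apply hy₀0
      have : toEuclideanLin S (toEuclideanLin S x₀) = y₀ := by
        rw [hSx₀, ← toEL_mul, hSS', toEL_one]
      rw [h, map_zero, map_zero] at this
      exact this.symm
    exact fun h => hx₀0 (by rw [h] at hx₀mem; exact (Submodule.mem_bot ℂ).mp hx₀mem)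
  have hBrank : 1 ≤ Module.finrank ℂ
      (Module.End.eigenspace (toEuclideanLin (S⁻¹ * N * S)) (lam i)) := by
    rw [Nat.one_le_iff_ne_zero]
    intro h
    exact hBne (Submodule.finrank_eq_zero.mp h)
  -- dimension of Kᗮ is at most 1
  have hKrank : n - 1 ≤ Module.finrank ℂ K := by
    have hv : ∀ j, ∃ y, y ∈ Module.End.eigenspace (toEuclideanLin (S * N * S⁻¹)) (lam j)
        ∧ y ≠ 0 := fun j => Submodule.exists_mem_ne_zero_of_ne_bot (hne j)
    choose v hv1 hv2 using hv
    have hli : LinearIndependent ℂ v :=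
      Module.End.eigenvectors_linearIndependent' (toEuclideanLin (S * N * S⁻¹)) lam hlam v
        (fun j => ⟨hv1 j, hv2 j⟩)
    have hwli : LinearIndependent ℂ (fun j : {j : Fin n // j ≠ i} => v j) :=
      hli.comp _ Subtype.val_injective
    have hspan : Submodule.span ℂ (Set.range (fun j : {j : Fin n // j ≠ i} => v j)) ≤ K := by
      rw [Submodule.span_le]
      rintro _ ⟨j, rfl⟩
      exact Submodule.mem_iSup_of_mem j.1 (Submodule.mem_iSup_of_mem j.2 (hv1 j.1))
    have hcard : Fintype.card {j : Fin n // j ≠ i} = n - 1 := by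
      rw [Fintype.card_subtype_compl, Fintype.card_subtype_eq, Fintype.card_fin]
    calc n - 1 = Module.finrank ℂ
          (Submodule.span ℂ (Set.range (fun j : {j : Fin n // j ≠ i} => v j))) := by
          rw [finrank_span_eq_card hwli, hcard]
      _ ≤ Module.finrank ℂ K := Submodule.finrank_mono hspan
  have htotal : Module.finrank ℂ K + Module.finrank ℂ Kᗮ = n := by
    rw [Submodule.finrank_add_finrank_orthogonal, finrank_euclideanSpace_fin]
  have hnpos : 0 < n := i.pos
  have hKorank : Module.finrank ℂ Kᗮ ≤ 1 := by omega
  exact Submodule.eq_of_le_of_finrank_le hle (le_trans hKorank hBrank)
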